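/- arXiv:2410.13811 — 2 statements merged into one kernel-verified Lean document; each statement's English description precedes it below -/
import Mathlib

section
/- Let G be a subgroup of (ℤ/2)⁵ (viewed as binary 5-tuples with coordinatewise addition, coordinates indexed cyclically) satisfying: (a) every coordinate projection G → ℤ/2 is surjective; (b) no nonzero element of G has exactly one coordinate equal to 1 and no nonzero element has exactly one coordinate equal to 0; (c) no two distinct nonzero elements φ, ψ of G satisfy |supp(φ) ∩ supp(ψ)| = 1, where supp denotes the set of coordinates equal to 1; (d) no element of G has exactly two cyclically adjacent 1's (including positions 5 and 1 counted as adjacent). Then (1,1,1,1,1) ∈ G, and G is, up to the action of the dihedral group D₅ permuting coordinates cyclically and by reflection, either ⟨(1,1,1,1,1)⟩ or ⟨(1,1,1,1,1), (1,0,1,0,0)⟩. -/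
/-- The support of a binary 5-tuple: the set of coordinates equal to `1`. -/
def supp (φ : Fin 5 → ZMod 2) : Finset (Fin 5) := Finset.univ.filter fun i => φ i = 1

/-- The dihedral group D₅ acting on the cyclically indexed coordinates:
the subgroup of permutations of `Fin 5` generated by the cyclic rotation
and the reflection `i ↦ -i`. -/
def dihedralD5 : Subgroup (Equiv.Perm (Fin 5)) :=
  Subgroup.closure {finRotate 5, Equiv.neg (Fin 5)}

namespace Stmt4Aux

abbrev Vv := Fin 5 → ZMod 2

def full : Vv := fun _ => 1

def pvec (k : Fin 5) : Vv := fun i => if i = k ∨ i = k + 2 then 1 else 0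

def Shape (v : Vv) : Prop := (supp v).card ≠ 1 ∧
  (Finset.univ.filter fun i => v i = 0).card ≠ 1 ∧ ∀ i : Fin 5, supp v ≠ {i, i + 1}

instance (v : Vv) : Decidable (Shape v) := by unfold Shape supp; infer_instance

set_option synthInstance.maxSize 2000 in
set_option synthInstance.maxHeartbeats 2000000 in
set_option maxHeartbeats 2000000 in
lemma D1 : ∀ v w : Vv, v ≠ 0 → w ≠ 0 → v ≠ w → v ≠ full → w ≠ full → v + w ≠ full →
    Shape v → Shape w → Shape (v + w) →
    (supp v ∩ supp w).card ≠ 1 → (supp v ∩ supp (v + w)).card ≠ 1 →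
    (supp w ∩ supp (v + w)).card ≠ 1 → False := by decide

lemma D2 : ∀ v : Vv, v ≠ full → ∃ j, v j = 0 := by decide

set_option synthInstance.maxSize 2000 in
set_option synthInstance.maxHeartbeats 2000000 in
set_option maxHeartbeats 2000000 in
lemma D3 : ∀ w : Vv, w ≠ 0 → w ≠ full → Shape w → Shape (w + full) →
    (supp w ∩ supp full).card ≠ 1 → (supp w ∩ supp (w + full)).card ≠ 1 →
    (supp full ∩ supp (w + full)).card ≠ 1 →
    ∃ k, w = pvec k ∨ w = full + pvec k := by decide

set_option synthInstance.maxSize 2000 in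
set_option synthInstance.maxHeartbeats 2000000 in
set_option maxHeartbeats 2000000 in
lemma D4 : ∀ l k : Fin 5, ∀ a b : Vv,
    (a = pvec l ∨ a = full + pvec l) → (b = pvec k ∨ b = full + pvec k) →
    a ≠ b → (supp a ∩ supp b).card ≠ 1 → (Shape (a + b) ∨ a + b = full) → l = k := by decide

lemma T1 : ∀ k : Fin 5, (pvec k) ∘ ⇑((finRotate 5) ^ (k : ℕ)) = ![1, 0, 1, 0, 0] := by decide

lemma negVv : ∀ v : Vv, -v = v := by decide

lemma ffz : full + full = (0 : Vv) := by decide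

lemma full_ne_zero : full ≠ (0 : Vv) := by decide

lemma pvec_ne_zero : ∀ k : Fin 5, pvec k ≠ 0 := by decide

lemma fp_ne_zero : ∀ k : Fin 5, full + pvec k ≠ 0 := by decide

lemma fp_ne_full : ∀ k : Fin 5, full + pvec k ≠ full := by decide

lemma pvec_ne_full : ∀ k : Fin 5, pvec k ≠ full := by decide

/-- add-cancel in char 2 -/
lemma cancel {a b : Vv} (h : a + b = 0) : a = b := by
  have : a = -b := by rwa [add_eq_zero_iff_eq_neg] at h
  rwa [negVv] at this

/-- the subgroup {0, full} -/
def K1 : AddSubgroup Vv where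
  carrier := {0, full}
  zero_mem' := Or.inl rfl
  add_mem' := by
    rintro a b (rfl | rfl) (rfl | rfl)
    · exact Or.inl (by simp)
    · exact Or.inr (by simp)
    · exact Or.inr (by simp)
    · exact Or.inl ffz
  neg_mem' := by
    rintro a (rfl | rfl)
    · exact Or.inl (by simp)
    · exact Or.inr (negVv full)

lemma clK1 : AddSubgroup.closure {full} = K1 := by
  apply le_antisymm
  · rw [AddSubgroup.closure_le]
    rintro x rfl
    exact Or.inr rfl
  · rintro x (rfl | rfl)
    · exact zero_mem _
    · exact AddSubgroup.subset_closure rfl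

def v2 : Vv := ![1, 0, 1, 0, 0]

lemma v2ff : v2 + (full + v2) = full := by decide
lemma fv2f : full + (full + v2) = v2 := by decide
lemma v2v2 : v2 + v2 = (0 : Vv) := by decide
lemma fv2fv2 : (full + v2) + (full + v2) = (0 : Vv) := by decide
lemma fv2neg : -(full + v2) = full + v2 := negVv _
lemma v2neg : -v2 = v2 := negVv _

/-- the subgroup {0, v2, full + v2, full} -/
def K2 : AddSubgroup Vv where
  carrier := {0, v2, full + v2, full}
  zero_mem' := Or.inl rfl
  add_mem' := by
    rintro a b (rfl | rfl | rfl | rfl) (rfl | rfl | rfl | rfl) <;>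
      simp only [Set.mem_insert_iff, Set.mem_singleton_iff, zero_add, add_zero] <;> decide
  neg_mem' := by
    rintro a (rfl | rfl | rfl | rfl) <;>
      simp only [Set.mem_insert_iff, Set.mem_singleton_iff] <;> decide

lemma clK2 : AddSubgroup.closure {full, v2} = K2 := by
  apply le_antisymm
  · rw [AddSubgroup.closure_le]
    rintro x (rfl | rfl)
    · exact Or.inr (Or.inr (Or.inr rfl))
    · exact Or.inr (Or.inl rfl)
  · rintro x (rfl | rfl | rfl | rfl)
    · exact zero_mem _
    · exact AddSubgroup.subset_closure (Or.inr rfl)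
    · exact add_mem (AddSubgroup.subset_closure (Or.inl rfl))
        (AddSubgroup.subset_closure (Or.inr rfl))
    · exact AddSubgroup.subset_closure (Or.inl rfl)

lemma rot_mem (k : Fin 5) : ((finRotate 5) ^ (k : ℕ)) ∈ dihedralD5 :=
  Subgroup.pow_mem _ (Subgroup.subset_closure (Set.mem_insert _ _)) _

lemma comp_inj (σ : Equiv.Perm (Fin 5)) {f g : Vv} (h : f ∘ ⇑σ = g ∘ ⇑σ) : f = g := by
  funext i
  have := congrFun h (σ.symm i)
  simpa using this

lemma add_comp (a b : Vv) (σ : Equiv.Perm (Fin 5)) : (a + b) ∘ ⇑σ = a ∘ ⇑σ + b ∘ ⇑σ := rfl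

lemma full_comp (σ : Equiv.Perm (Fin 5)) : full ∘ ⇑σ = full := rfl

lemma zero_comp (σ : Equiv.Perm (Fin 5)) : (0 : Vv) ∘ ⇑σ = 0 := rfl

end Stmt4Aux

open Stmt4Aux in
theorem stmt_4 (G : AddSubgroup (Fin 5 → ZMod 2))
    -- (a) every coordinate projection is surjective
    (ha : ∀ e : Fin 5, ∀ z : ZMod 2, ∃ φ ∈ G, φ e = z)
    -- (b) no nonzero element has exactly one coordinate 1, and none has
    -- exactly one coordinate 0
    (hb : ∀ φ ∈ G, φ ≠ 0 →
      (supp φ).card ≠ 1 ∧ (Finset.univ.filter fun i => φ i = 0).card ≠ 1)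
    -- (c) no two distinct nonzero elements have supports meeting in exactly
    -- one coordinate
    (hc : ∀ φ ∈ G, ∀ ψ ∈ G, φ ≠ 0 → ψ ≠ 0 → φ ≠ ψ →
      (supp φ ∩ supp ψ).card ≠ 1)
    -- (d) no element has support exactly two cyclically adjacent coordinates
    (hd : ∀ φ ∈ G, ∀ i : Fin 5, supp φ ≠ {i, i + 1}) :
    (fun _ => 1 : Fin 5 → ZMod 2) ∈ G ∧
    ∃ σ ∈ dihedralD5,
      (∀ φ : Fin 5 → ZMod 2, φ ∈ G ↔
        φ ∘ σ ∈ AddSubgroup.closure {(fun _ => 1 : Fin 5 → ZMod 2)}) ∨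
      (∀ φ : Fin 5 → ZMod 2, φ ∈ G ↔
        φ ∘ σ ∈ AddSubgroup.closure
          {(fun _ => 1 : Fin 5 → ZMod 2), ![1, 0, 1, 0, 0]}) := by
  have hshape : ∀ w ∈ G, w ≠ 0 → Shape w :=
    fun w hw h0 => ⟨(hb w hw h0).1, (hb w hw h0).2, hd w hw⟩
  -- Step 1: full ∈ G
  have hfullG : full ∈ G := by
    by_contra hfull
    obtain ⟨v, hvG, hv0⟩ := ha 0 1
    have hvne : v ≠ 0 := by
      rintro rfl
      exact one_ne_zero hv0.symm
    have hvnf : v ≠ full := fun h => hfull (h ▸ hvG)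
    have huniq : ∀ w ∈ G, w ≠ 0 → w = v := by
      intro w hwG hw0
      by_contra hne
      have hwnf : w ≠ full := fun h => hfull (h ▸ hwG)
      have hsG : v + w ∈ G := add_mem hvG hwG
      have hs0 : v + w ≠ 0 := fun h => (Ne.symm hne) (cancel h)
      have hsnf : v + w ≠ full := fun h => hfull (h ▸ hsG)
      have hsv : v ≠ v + w := by
        intro h
        have := add_left_cancel (show v + 0 = v + w by rw [add_zero]; exact h)
        exact hw0 this.symm
      have hsw : w ≠ v + w := by
        intro h
        have := add_right_cancel (show (0 : Vv) + w = v + w by rw [zero_add]; exact h)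
        exact hvne this.symm
      exact D1 v w hvne hw0 (Ne.symm hne) hvnf hwnf hsnf
        (hshape v hvG hvne) (hshape w hwG hw0) (hshape _ hsG hs0)
        (hc v hvG w hwG hvne hw0 (Ne.symm hne))
        (hc v hvG _ hsG hvne hs0 hsv)
        (hc w hwG _ hsG hw0 hs0 hsw)
    obtain ⟨j, hj⟩ := D2 v hvnf
    obtain ⟨u, huG, huj⟩ := ha j 1
    have hune : u ≠ 0 := by rintro rfl; exact one_ne_zero huj.symm
    have := huniq u huG hune
    rw [this, hj] at huj
    exact one_ne_zero huj.symm
  -- Step 2: classify nonzero non-full elements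
  have hclass : ∀ w ∈ G, w ≠ 0 → w ≠ full → ∃ k, w = pvec k ∨ w = full + pvec k := by
    intro w hwG hw0 hwf
    have hsG : w + full ∈ G := add_mem hwG hfullG
    have hs0 : w + full ≠ 0 := fun h => hwf (cancel h)
    have hsf : w + full ≠ full := by
      intro h
      apply hw0
      have : w + full = 0 + full := by simpa using h
      exact add_right_cancel this
    have hwnefull' : full ≠ w + full := by
      intro h
      apply hw0
      have : (0 : Vv) + full = w + full := by simpa using h
      exact (add_right_cancel this).symm
    have hwnes : w ≠ w + full := by
      intro h
      apply full_ne_zero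
      have : w + full = w + 0 := by simpa using h.symm
      exact add_left_cancel this
    exact D3 w hw0 hwf (hshape w hwG hw0) (hshape _ hsG hs0)
      (hc w hwG full hfullG hw0 full_ne_zero hwf)
      (hc w hwG _ hsG hw0 hs0 hwnes)
      (hc full hfullG _ hsG full_ne_zero hs0 hwnefull')
  refine ⟨hfullG, ?_⟩
  by_cases hB : ∃ w ∈ G, w ≠ 0 ∧ w ≠ full
  · -- the ⟨full, pair⟩ case
    obtain ⟨w, hwG, hw0, hwf⟩ := hB
    obtain ⟨k, hwk⟩ := hclass w hwG hw0 hwf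
    have hpk : pvec k ∈ G ∧ full + pvec k ∈ G := by
      rcases hwk with rfl | rfl
      · exact ⟨hwG, add_mem hfullG hwG⟩
      · refine ⟨?_, hwG⟩
        have : full + (full + pvec k) = pvec k := by rw [← add_assoc, ffz, zero_add]
        exact this ▸ add_mem hfullG hwG
    -- every element of G is one of the four
    have hmem : ∀ φ ∈ G, φ = 0 ∨ φ = full ∨ φ = pvec k ∨ φ = full + pvec k := by
      intro φ hφG
      by_cases h0 : φ = 0
      · exact Or.inl h0
      by_cases hf : φ = full
      · exact Or.inr (Or.inl hf)
      obtain ⟨l, hl⟩ := hclass φ hφG h0 hf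
      by_cases hpe : φ = pvec k
      · exact Or.inr (Or.inr (Or.inl hpe))
      · have hlk : l = k := by
          have hsumG : φ + pvec k ∈ G := add_mem hφG hpk.1
          have hs0 : φ + pvec k ≠ 0 := fun h => hpe (cancel h)
          have hshs : Shape (φ + pvec k) ∨ φ + pvec k = full := by
            by_cases hsf : φ + pvec k = full
            · exact Or.inr hsf
            · exact Or.inl (hshape _ hsumG hs0)
          exact D4 l k φ (pvec k) hl (Or.inl rfl) hpe
            (hc φ hφG (pvec k) hpk.1 h0 (pvec_ne_zero k) hpe) hshs
        subst hlk
        rcases hl with h | h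
        · exact Or.inr (Or.inr (Or.inl h))
        · exact Or.inr (Or.inr (Or.inr h))
    refine ⟨(finRotate 5) ^ (k : ℕ), rot_mem k, Or.inr ?_⟩
    intro φ
    set σ := (finRotate 5) ^ (k : ℕ) with hσ
    have hT1 : pvec k ∘ ⇑σ = v2 := T1 k
    have hcl : ∀ ψ : Vv, ψ ∈ AddSubgroup.closure {full, v2} ↔
        (ψ = 0 ∨ ψ = v2 ∨ ψ = full + v2 ∨ ψ = full) := by
      intro ψ
      rw [clK2]
      exact Iff.rfl
    have hgoal : (AddSubgroup.closure {(fun _ => 1 : Fin 5 → ZMod 2), ![1, 0, 1, 0, 0]}) =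
        AddSubgroup.closure {full, v2} := rfl
    rw [hgoal, hcl]
    constructor
    · intro hφ
      rcases hmem φ hφ with rfl | rfl | rfl | rfl
      · exact Or.inl (zero_comp σ)
      · exact Or.inr (Or.inr (Or.inr (full_comp σ)))
      · exact Or.inr (Or.inl hT1)
      · refine Or.inr (Or.inr (Or.inl ?_))
        rw [add_comp, full_comp, hT1]
    · rintro (h | h | h | h)
      · have : φ = 0 := comp_inj σ (by rw [h, zero_comp])
        exact this ▸ zero_mem G
      · have : φ = pvec k := comp_inj σ (by rw [h, hT1])
        exact this ▸ hpk.1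
      · have : φ = full + pvec k := comp_inj σ (by rw [h, add_comp, full_comp, hT1])
        exact this ▸ hpk.2
      · have : φ = full := comp_inj σ (by rw [h, full_comp])
        exact this ▸ hfullG
  · -- the ⟨full⟩ case
    push_neg at hB
    refine ⟨1, one_mem _, Or.inl ?_⟩
    intro φ
    have hcomp : φ ∘ ⇑(1 : Equiv.Perm (Fin 5)) = φ := rfl
    rw [hcomp]
    have hcl : (AddSubgroup.closure {(fun _ => 1 : Fin 5 → ZMod 2)}) =
        AddSubgroup.closure {full} := rfl
    rw [hcl, clK1]
    constructor
    · intro hφ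
      by_cases h0 : φ = 0
      · exact Or.inl h0
      · exact Or.inr (hB φ hφ h0)
    · rintro (rfl | rfl)
      · exact zero_mem G
      · exact hfullG
end

section
/- Let G be a subgroup of (ℤ/2)⁵ such that every coordinate projection G → ℤ/2 is surjective, no nonzero element of G has Hamming weight 1 or 4, and no two elements of G have supports intersecting in exactly one coordinate. Then the all-ones vector (1,1,1,1,1) belongs to G. -/
set_option synthInstance.maxSize 4000 in
lemma wt_cases : ∀ φ : Fin 5 → ZMod 2, φ ≠ 0 → (supp φ).card ≠ 1 → (supp φ).card ≠ 4 →
    (supp φ).card = 2 ∨ (supp φ).card = 3 ∨ (supp φ).card = 5 := by decide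

set_option synthInstance.maxSize 4000 in
lemma card5_allones : ∀ φ : Fin 5 → ZMod 2, (supp φ).card = 5 → φ = fun _ => 1 := by decide

set_option synthInstance.maxSize 4000 in
lemma ne0_of_coord : ∀ (φ : Fin 5 → ZMod 2) (e : Fin 5), φ e = 1 → φ ≠ 0 := by decide

set_option synthInstance.maxSize 4000 in
lemma exists_zero : ∀ φ : Fin 5 → ZMod 2,
    (supp φ).card = 2 ∨ (supp φ).card = 3 → ∃ e, φ e = 0 := by decide

set_option synthInstance.maxSize 4000 in
lemma L22 : ∀ (φ ψ : Fin 5 → ZMod 2) (e : Fin 5), (supp φ).card = 2 → (supp ψ).card = 2 →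
    φ e = 0 → ψ e = 1 → (supp φ ∩ supp ψ).card ≠ 1 →
    (φ + ψ ≠ 0 ∧ (supp (φ + ψ)).card = 4) := by decide

set_option synthInstance.maxSize 4000 in
lemma L33 : ∀ (θ ψ : Fin 5 → ZMod 2) (e : Fin 5), (supp θ).card = 3 → (supp ψ).card = 3 →
    θ e = 0 → ψ e = 1 → (supp θ ∩ supp ψ).card ≠ 1 →
    (supp (θ + ψ) ∩ supp θ).card = 1 := by decide

set_option synthInstance.maxSize 4000 in
lemma L32 : ∀ (θ ψ : Fin 5 → ZMod 2), (supp θ).card = 3 → (supp ψ).card = 2 →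
    (supp θ ∩ supp ψ).card ≠ 1 →
    (θ + ψ ≠ 0 ∧ (supp (θ + ψ)).card = 1) ∨ θ + ψ = (fun _ => 1) := by decide

lemma case3 (G : AddSubgroup (Fin 5 → ZMod 2))
    (hsurj : ∀ e : Fin 5, ∀ z : ZMod 2, ∃ φ ∈ G, φ e = z)
    (hwt : ∀ φ ∈ G, φ ≠ 0 → (supp φ).card ≠ 1 ∧ (supp φ).card ≠ 4)
    (hint : ∀ φ ∈ G, ∀ ψ ∈ G, (supp φ ∩ supp ψ).card ≠ 1)
    (θ : Fin 5 → ZMod 2) (hθ : θ ∈ G) (h3 : (supp θ).card = 3) :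
    (fun _ => 1 : Fin 5 → ZMod 2) ∈ G := by
  obtain ⟨e, he⟩ := exists_zero θ (Or.inr h3)
  obtain ⟨ψ, hψG, hψe⟩ := hsurj e 1
  have hψ0 : ψ ≠ 0 := ne0_of_coord ψ e hψe
  obtain ⟨hw1, hw4⟩ := hwt ψ hψG hψ0
  rcases wt_cases ψ hψ0 hw1 hw4 with h2 | h3' | h5
  · rcases L32 θ ψ h3 h2 (hint θ hθ ψ hψG) with ⟨hne, hc⟩ | hall
    · exact absurd hc (hwt _ (G.add_mem hθ hψG) hne).1
    · exact hall ▸ G.add_mem hθ hψG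
  · exact absurd (L33 θ ψ e h3 h3' he hψe (hint θ hθ ψ hψG))
      (hint _ (G.add_mem hθ hψG) θ hθ)
  · exact (card5_allones ψ h5) ▸ hψG

theorem stmt_5 (G : AddSubgroup (Fin 5 → ZMod 2))
    -- every coordinate projection is surjective
    (hsurj : ∀ e : Fin 5, ∀ z : ZMod 2, ∃ φ ∈ G, φ e = z)
    -- no nonzero element has Hamming weight 1 or 4
    (hwt : ∀ φ ∈ G, φ ≠ 0 → (supp φ).card ≠ 1 ∧ (supp φ).card ≠ 4)
    -- no two elements have supports intersecting in exactly one coordinate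
    (hint : ∀ φ ∈ G, ∀ ψ ∈ G, (supp φ ∩ supp ψ).card ≠ 1) :
    (fun _ => 1 : Fin 5 → ZMod 2) ∈ G := by
  obtain ⟨φ, hφG, hφ0⟩ := hsurj 0 1
  have hφne : φ ≠ 0 := ne0_of_coord φ 0 hφ0
  obtain ⟨h1, h4⟩ := hwt φ hφG hφne
  rcases wt_cases φ hφne h1 h4 with h2 | h3 | h5
  · obtain ⟨e, he⟩ := exists_zero φ (Or.inl h2)
    obtain ⟨ψ, hψG, hψe⟩ := hsurj e 1
    have hψ0 : ψ ≠ 0 := ne0_of_coord ψ e hψe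
    obtain ⟨hw1, hw4⟩ := hwt ψ hψG hψ0
    rcases wt_cases ψ hψ0 hw1 hw4 with k2 | k3 | k5
    · obtain ⟨hne, hc⟩ := L22 φ ψ e h2 k2 he hψe (hint φ hφG ψ hψG)
      exact absurd hc (hwt _ (G.add_mem hφG hψG) hne).2
    · exact case3 G hsurj hwt hint ψ hψG k3
    · exact (card5_allones ψ k5) ▸ hψG
  · exact case3 G hsurj hwt hint φ hφG h3
  · exact (card5_allones φ h5) ▸ hφG
end
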